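/- For every integer m, the group with presentation on six generators a₁, b₁, a₂, b₂, c, d with relators a₁⁻¹[b₁⁻¹,d⁻¹], b₁⁻¹[a₁⁻¹,d], c⁻¹[b₂⁻¹,d⁻¹], d·[c⁻¹,b₂]^m, [a₁,c], [b₁,c], [a₂,c], [a₂,d], [a₁,b₁][a₂,b₂], [c,d], and b₁b₂ is infinite cyclic, generated by the image of a₂; in particular the images of a₁, b₁, b₂, c, d are all trivial in this group. -/

import Mathlib

/-!
For every integer m, the group presented on a₁, b₁, a₂, b₂, c, d with relators
a₁⁻¹[b₁⁻¹,d⁻¹], b₁⁻¹[a₁⁻¹,d], c⁻¹[b₂⁻¹,d⁻¹], d·[c⁻¹,b₂]^m, [a₁,c], [b₁,c], [a₂,c],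
[a₂,d], [a₁,b₁][a₂,b₂], [c,d], b₁b₂ is infinite cyclic, generated by the image of a₂;
in particular the images of a₁, b₁, b₂, c, d are all trivial.
Generators: a₁ = 0, b₁ = 1, a₂ = 2, b₂ = 3, c = 4, d = 5.
Here [x,y] = x y x⁻¹ y⁻¹.
-/

namespace Stmt10

def a₁ : FreeGroup (Fin 6) := FreeGroup.of 0
def b₁ : FreeGroup (Fin 6) := FreeGroup.of 1
def a₂ : FreeGroup (Fin 6) := FreeGroup.of 2
def b₂ : FreeGroup (Fin 6) := FreeGroup.of 3
def c : FreeGroup (Fin 6) := FreeGroup.of 4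
def d : FreeGroup (Fin 6) := FreeGroup.of 5

/-- The commutator [x, y] = x y x⁻¹ y⁻¹. -/
def comm (x y : FreeGroup (Fin 6)) : FreeGroup (Fin 6) := x * y * x⁻¹ * y⁻¹

def rels (m : ℤ) : Set (FreeGroup (Fin 6)) :=
  { a₁⁻¹ * comm b₁⁻¹ d⁻¹,
    b₁⁻¹ * comm a₁⁻¹ d,
    c⁻¹ * comm b₂⁻¹ d⁻¹,
    d * (comm c⁻¹ b₂) ^ m,
    comm a₁ c,
    comm b₁ c,
    comm a₂ c,
    comm a₂ d,
    comm a₁ b₁ * comm a₂ b₂,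
    comm c d,
    b₁ * b₂ }

lemma mk_rel_eq_one {m : ℤ} {r : FreeGroup (Fin 6)} (hr : r ∈ rels m) :
    PresentedGroup.mk (rels m) r = 1 :=
  (QuotientGroup.eq_one_iff r).mpr (Subgroup.subset_normalClosure hr)

lemma triv (m : ℤ) :
    PresentedGroup.of (rels := rels m) 0 = 1 ∧
    PresentedGroup.of (rels := rels m) 1 = 1 ∧
    PresentedGroup.of (rels := rels m) 3 = 1 ∧
    PresentedGroup.of (rels := rels m) 4 = 1 ∧
    PresentedGroup.of (rels := rels m) 5 = 1 := by
  set A := PresentedGroup.of (rels := rels m) 0 with hA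
  set B := PresentedGroup.of (rels := rels m) 1 with hB
  set B2 := PresentedGroup.of (rels := rels m) 3 with hB2
  set C := PresentedGroup.of (rels := rels m) 4 with hC
  set D := PresentedGroup.of (rels := rels m) 5 with hD
  have key : ∀ r ∈ rels m, PresentedGroup.mk (rels m) r = 1 := fun r hr => mk_rel_eq_one hr
  have h1 : A⁻¹ * (B⁻¹ * D⁻¹ * B * D) = 1 := by
    have := key _ (by simp [rels] : a₁⁻¹ * comm b₁⁻¹ d⁻¹ ∈ rels m)
    simpa [comm, a₁, b₁, d, hA, hB, hD, PresentedGroup.of] using this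
  have h2 : B⁻¹ * (A⁻¹ * D * A * D⁻¹) = 1 := by
    have := key _ (by simp [rels] : b₁⁻¹ * comm a₁⁻¹ d ∈ rels m)
    simpa [comm, a₁, b₁, d, hA, hB, hD, PresentedGroup.of] using this
  have h3 : C⁻¹ * (B2⁻¹ * D⁻¹ * B2 * D) = 1 := by
    have := key _ (by simp [rels] : c⁻¹ * comm b₂⁻¹ d⁻¹ ∈ rels m)
    simpa [comm, c, b₂, d, hC, hB2, hD, PresentedGroup.of] using this
  have h4 : D * (C⁻¹ * B2 * C * B2⁻¹) ^ m = 1 := by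
    have := key _ (by simp [rels] : d * (comm c⁻¹ b₂) ^ m ∈ rels m)
    simpa [comm, c, b₂, d, hC, hB2, hD, PresentedGroup.of] using this
  have h6 : B * C * B⁻¹ * C⁻¹ = 1 := by
    have := key _ (by simp [rels] : comm b₁ c ∈ rels m)
    simpa [comm, b₁, c, hB, hC, PresentedGroup.of] using this
  have h11 : B * B2 = 1 := by
    have := key _ (by simp [rels] : b₁ * b₂ ∈ rels m)
    simpa [b₁, b₂, hB, hB2, PresentedGroup.of] using this
  have hB2B : B2 = B⁻¹ := (inv_eq_of_mul_eq_one_right h11).symm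
  have hBC : B * C = C * B :=
    mul_inv_eq_iff_eq_mul.mp (mul_inv_eq_one.mp h6)
  have hcomm1 : C⁻¹ * B2 * C * B2⁻¹ = 1 := by
    rw [hB2B]
    calc C⁻¹ * B⁻¹ * C * B⁻¹⁻¹ = C⁻¹ * B⁻¹ * (C * B) := by group
      _ = C⁻¹ * B⁻¹ * (B * C) := by rw [← hBC]
      _ = 1 := by group
  have hD1 : D = 1 := by rw [hcomm1, one_zpow, mul_one] at h4; exact h4
  have hA1 : A = 1 := by
    rw [hD1] at h1
    simpa using h1
  have hB1 : B = 1 := by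
    rw [hD1, hA1] at h2
    simpa using h2
  have hC1 : C = 1 := by
    rw [hD1] at h3
    simpa using h3
  exact ⟨hA1, hB1, by rw [hB2B, hB1, inv_one], hC1, hD1⟩

theorem pi1_infinite_cyclic_gen_a₂ (m : ℤ) :
    Nonempty (PresentedGroup (rels m) ≃* Multiplicative ℤ) ∧
    Subgroup.zpowers (PresentedGroup.of (rels := rels m) 2) = ⊤ ∧
    (PresentedGroup.of (rels := rels m) 0 = 1 ∧
     PresentedGroup.of (rels := rels m) 1 = 1 ∧
     PresentedGroup.of (rels := rels m) 3 = 1 ∧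
     PresentedGroup.of (rels := rels m) 4 = 1 ∧
     PresentedGroup.of (rels := rels m) 5 = 1) := by
  obtain ⟨hA, hB, hB2, hC, hD⟩ := triv m
  refine ⟨?_, ?_, hA, hB, hB2, hC, hD⟩
  · -- the isomorphism to ℤ
    set f : Fin 6 → Multiplicative ℤ :=
      fun i => if i = 2 then Multiplicative.ofAdd 1 else 1 with hf
    have hrel : ∀ r ∈ rels m, FreeGroup.lift f r = 1 := by
      intro r hr
      simp only [rels, Set.mem_insert_iff, Set.mem_singleton_iff] at hr
      rcases hr with h | h | h | h | h | h | h | h | h | h | h <;>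
        subst h <;>
        simp +decide [comm, a₁, b₁, a₂, b₂, c, d, hf, mul_comm]
    let φ : PresentedGroup (rels m) →* Multiplicative ℤ := PresentedGroup.toGroup hrel
    let ψ : Multiplicative ℤ →* PresentedGroup (rels m) :=
      zpowersHom _ (PresentedGroup.of (rels := rels m) 2)
    have hφ2 : φ (PresentedGroup.of 2) = Multiplicative.ofAdd 1 := by
      simp [φ, hf]
    have hofval : ∀ x : Fin 6, x ≠ 2 → PresentedGroup.of (rels := rels m) x = 1 := by
      intro x hx
      fin_cases x
      · exact hA
      · exact hB
      · exact absurd rfl hx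
      · exact hB2
      · exact hC
      · exact hD
    have h1 : ψ.comp φ = MonoidHom.id _ := by
      apply PresentedGroup.ext
      intro x
      simp only [MonoidHom.comp_apply, MonoidHom.id_apply]
      by_cases hx : x = 2
      · subst hx
        rw [hφ2]
        simp [ψ]
      · rw [hofval x hx]
        simp
    have h2 : φ.comp ψ = MonoidHom.id _ := by
      apply MonoidHom.ext_mint
      simp [ψ, hφ2]
    exact ⟨MonoidHom.toMulEquiv φ ψ h1 h2⟩
  · -- zpowers = ⊤
    have hofval : ∀ x : Fin 6, x ≠ 2 → PresentedGroup.of (rels := rels m) x = 1 := by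
      intro x hx
      fin_cases x
      · exact hA
      · exact hB
      · exact absurd rfl hx
      · exact hB2
      · exact hC
      · exact hD
    rw [Subgroup.eq_top_iff']
    intro x
    apply PresentedGroup.generated_by
    intro j
    by_cases hj : j = 2
    · subst hj; exact Subgroup.mem_zpowers _
    · rw [hofval j hj]; exact Subgroup.one_mem _

end Stmt10
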